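/- Let H be a separable Hilbert space with orthonormal basis (f_n)_{n∈ℕ₀}, let (g_n)_{n∈ℕ₀} ⊂ H, and let T : H → H be a bounded linear operator with T f_n = g_n for all n. Let P_J denote the orthogonal projection onto span{f_0,…,f_J}. Let η, μ > 0 and let J ∈ ℕ satisfy J ≥ 2μ and J ≥ 3. Suppose that |⟨g_j, f_k⟩| ≤ η / (k² − (j + μ/(j+1))²) for all integers j, k with 0 ≤ j ≤ J < k. Then ‖(Id − P_J) T P_J‖ ≤ 4η · log(J)/J. -/

import Mathlib

open scoped InnerProductSpace


noncomputable def Hsum (n : ℕ) : ℝ := ∑ i ∈ Finset.range n, 1/((i:ℝ)+1)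

lemma Hsum_nonneg (n : ℕ) : 0 ≤ Hsum n := by
  apply Finset.sum_nonneg; intro i _; positivity

lemma Hsum_eq_harmonic (n : ℕ) : Hsum n = (harmonic n : ℝ) := by
  unfold Hsum harmonic
  push_cast
  simp [one_div]

lemma Hsum_le (n : ℕ) : Hsum n ≤ 1 + Real.log n := by
  rw [Hsum_eq_harmonic]; exact harmonic_le_one_add_log n

lemma Hsum_Icc (n : ℕ) : ∑ i ∈ Finset.Icc 1 n, 1/(i:ℝ) = Hsum n := by
  unfold Hsum
  rw [show Finset.Icc 1 n = Finset.Ico 1 (n+1) by rfl, Finset.sum_Ico_eq_sum_range]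
  simp [add_comm 1]


lemma ptwise {J j k : ℕ} {μ : ℝ} (hμ : 0 < μ) (hjJ : j ≤ J) (hJk : J < k)
    (h2μ : 2*μ ≤ (J:ℝ)) :
    0 < (k:ℝ)^2 - ((j:ℝ)+μ/((j:ℝ)+1))^2 ∧
    ((k:ℝ) - j) * k ≤ 2 * ((k:ℝ)^2 - ((j:ℝ)+μ/((j:ℝ)+1))^2) := by
  have hj0 : (0:ℝ) ≤ (j:ℝ) := Nat.cast_nonneg j
  have hjk : (j:ℝ) + 1 ≤ (k:ℝ) := by
    have : j + 1 ≤ k := by omega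
    exact_mod_cast this
  have hJk' : (J:ℝ) + 1 ≤ (k:ℝ) := by
    have : J + 1 ≤ k := by omega
    exact_mod_cast this
  have hjJ' : (j:ℝ) ≤ (J:ℝ) := Nat.cast_le.mpr hjJ
  have hj1 : (0:ℝ) < (j:ℝ) + 1 := by linarith
  set e : ℝ := μ/((j:ℝ)+1) with he
  have he0 : 0 < e := by positivity
  -- e ≤ (J+1-j)/2
  have hkey : e ≤ ((J:ℝ) + 1 - j)/2 := by
    rw [he, div_le_div_iff₀ hj1 (by norm_num : (0:ℝ) < 2)]
    nlinarith [sq_nonneg ((J:ℝ) - j)]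
  have hx : (j:ℝ) + e ≤ ((j:ℝ) + (k:ℝ))/2 := by
    have : ((J:ℝ) + 1 - j)/2 ≤ ((k:ℝ) - j)/2 := by linarith
    linarith
  have hxk : (j:ℝ) + e < (k:ℝ) := by
    have : ((j:ℝ) + (k:ℝ))/2 < k := by linarith
    linarith
  constructor
  · nlinarith
  · nlinarith

lemma telescope_Icc (a b : ℕ) (ha : 0 < a) :
    ∑ i ∈ Finset.Icc (a+1) b, (1/((i:ℝ)-1) - 1/(i:ℝ)) ≤ 1/(a:ℝ) := by
  rw [show Finset.Icc (a+1) b = Finset.Ico (a+1) (b+1) by rfl, Finset.sum_Ico_eq_sum_range]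
  have key : ∀ m : ℕ, ∑ t ∈ Finset.range m, (1/(((a+1+t:ℕ):ℝ)-1) - 1/((a+1+t:ℕ):ℝ))
      = 1/(a:ℝ) - 1/((a+m:ℕ):ℝ) := by
    intro m
    have := Finset.sum_range_sub (f := fun t => -(1/(((a+t:ℕ)):ℝ))) m
    have h2 : ∀ t : ℕ, 1/(((a+1+t:ℕ):ℝ)-1) - 1/((a+1+t:ℕ):ℝ)
        = (fun t => -(1/(((a+t:ℕ)):ℝ))) (t+1) - (fun t => -(1/(((a+t:ℕ)):ℝ))) t := by
      intro t
      push_cast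
      ring_nf
    rw [Finset.sum_congr rfl (fun t _ => h2 t), this]
    push_cast
    ring
  rw [key]
  have : 0 ≤ 1/((a+(b+1-(a+1)):ℕ):ℝ) := by positivity
  linarith

lemma row_bound (J k : ℕ) (hk : J < k) :
    ∑ j ∈ Finset.range (J+1), 1/(((k:ℝ)-(j:ℝ))*(k:ℝ)) ≤ (Hsum (J+1) + 1)/((J:ℝ)+1) := by
  have hJ1 : (0:ℝ) < (J:ℝ)+1 := by positivity
  have hkR : ((J:ℝ)+1) ≤ (k:ℝ) := by exact_mod_cast Nat.succ_le_of_lt hk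
  have hrw : ∑ j ∈ Finset.range (J+1), 1/(((k:ℝ)-(j:ℝ))*(k:ℝ))
      = ∑ i ∈ Finset.Icc (k-J) k, 1/((i:ℝ)*(k:ℝ)) := by
    apply Finset.sum_nbij' (fun j => k - j) (fun i => k - i)
    · intro j hj; rw [Finset.mem_range] at hj; rw [Finset.mem_Icc]; omega
    · intro i hi; rw [Finset.mem_Icc] at hi; rw [Finset.mem_range]; omega
    · intro j hj; rw [Finset.mem_range] at hj; omega
    · intro i hi; rw [Finset.mem_Icc] at hi; omega
    · intro j hj
      rw [Finset.mem_range] at hj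
      have hjk : j ≤ k := by omega
      congr 2
      push_cast [Nat.cast_sub hjk]
      ring
  rw [hrw,
    ← Finset.sum_filter_add_sum_filter_not (Finset.Icc (k-J) k) (fun i => i ≤ J+1)]
  have h1 : ∑ i ∈ (Finset.Icc (k-J) k).filter (fun i => i ≤ J+1), 1/((i:ℝ)*(k:ℝ))
      ≤ Hsum (J+1)/((J:ℝ)+1) := by
    have step1 : ∑ i ∈ (Finset.Icc (k-J) k).filter (fun i => i ≤ J+1), 1/((i:ℝ)*(k:ℝ))
        ≤ ∑ i ∈ (Finset.Icc (k-J) k).filter (fun i => i ≤ J+1), 1/((i:ℝ)*((J:ℝ)+1)) := by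
      apply Finset.sum_le_sum
      intro i hi
      simp only [Finset.mem_filter, Finset.mem_Icc] at hi
      have hi1 : 1 ≤ i := by omega
      have hi1R : (1:ℝ) ≤ (i:ℝ) := by exact_mod_cast hi1
      gcongr
    have step2 : ∑ i ∈ (Finset.Icc (k-J) k).filter (fun i => i ≤ J+1), 1/((i:ℝ)*((J:ℝ)+1))
        ≤ ∑ i ∈ Finset.Icc 1 (J+1), 1/((i:ℝ)*((J:ℝ)+1)) := by
      apply Finset.sum_le_sum_of_subset_of_nonneg
      · intro i hi
        simp only [Finset.mem_filter, Finset.mem_Icc] at hi ⊢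
        omega
      · intro i _ _
        positivity
    have step3 : ∑ i ∈ Finset.Icc 1 (J+1), 1/((i:ℝ)*((J:ℝ)+1))
        = Hsum (J+1)/((J:ℝ)+1) := by
      rw [← Hsum_Icc (J+1), Finset.sum_div]
      apply Finset.sum_congr rfl
      intro i _
      rw [div_div]
    linarith
  have h2 : ∑ i ∈ (Finset.Icc (k-J) k).filter (fun i => ¬ i ≤ J+1), 1/((i:ℝ)*(k:ℝ))
      ≤ 1/((J:ℝ)+1) := by
    have step1 : ∑ i ∈ (Finset.Icc (k-J) k).filter (fun i => ¬ i ≤ J+1), 1/((i:ℝ)*(k:ℝ))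
        ≤ ∑ i ∈ (Finset.Icc (k-J) k).filter (fun i => ¬ i ≤ J+1),
            (1/((i:ℝ)-1) - 1/(i:ℝ)) := by
      apply Finset.sum_le_sum
      intro i hi
      simp only [Finset.mem_filter, Finset.mem_Icc, not_le] at hi
      have h2i : (2:ℝ) ≤ (i:ℝ) := by exact_mod_cast (by omega : 2 ≤ i)
      have hik : (i:ℝ) ≤ (k:ℝ) := by exact_mod_cast hi.1.2
      have hpos : (0:ℝ) < ((i:ℝ)-1) * i := by nlinarith
      have heq : 1/((i:ℝ)-1) - 1/(i:ℝ) = 1/(((i:ℝ)-1)*(i:ℝ)) := by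
        rw [div_sub_div _ _ (by linarith : (i:ℝ)-1 ≠ 0) (by linarith : (i:ℝ) ≠ 0)]
        norm_num
      rw [heq]
      gcongr
      nlinarith
    have step2 : ∑ i ∈ (Finset.Icc (k-J) k).filter (fun i => ¬ i ≤ J+1),
            (1/((i:ℝ)-1) - 1/(i:ℝ))
        ≤ ∑ i ∈ Finset.Icc (J+2) k, (1/((i:ℝ)-1) - 1/(i:ℝ)) := by
      apply Finset.sum_le_sum_of_subset_of_nonneg
      · intro i hi
        simp only [Finset.mem_filter, Finset.mem_Icc, not_le] at hi ⊢
        omega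
      · intro i hi _
        simp only [Finset.mem_Icc] at hi
        have h2i : (2:ℝ) ≤ (i:ℝ) := by exact_mod_cast (by omega : 2 ≤ i)
        have : 1/(i:ℝ) ≤ 1/((i:ℝ)-1) := by
          gcongr <;> linarith
        linarith
    have step3 := telescope_Icc (J+1) k (by omega)
    have : ((J:ℝ)+1) = ((J+1:ℕ):ℝ) := by push_cast; ring
    rw [this]
    calc _ ≤ _ := step1.trans step2
    _ ≤ _ := by
        convert step3 using 3 <;> push_cast <;> ring
  have hH : 0 ≤ Hsum (J+1) := Hsum_nonneg _
  rw [add_div]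
  linarith

lemma col_key (J m : ℕ) :
    ∑ t ∈ Finset.range m, (1/((t:ℝ)+1) - 1/(((J:ℕ):ℝ)+(t:ℝ)+1)) ≤ Hsum J := by
  have hf : ∀ t : ℕ, (0:ℝ) ≤ 1/((t:ℝ)+1) := by intro t; positivity
  have hsplit : ∑ t ∈ Finset.range m, (1/((t:ℝ)+1) - 1/((J:ℝ)+(t:ℝ)+1))
      = ∑ t ∈ Finset.range m, 1/((t:ℝ)+1) - ∑ t ∈ Finset.Ico J (J+m), 1/((t:ℝ)+1) := by
    rw [Finset.sum_sub_distrib]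
    congr 1
    rw [Finset.sum_Ico_eq_sum_range]
    simp only [Nat.add_sub_cancel_left]
    apply Finset.sum_congr rfl
    intro t _
    push_cast
    ring
  rw [hsplit]
  unfold Hsum
  rcases le_or_gt m J with hmJ | hmJ
  · have h1 : ∑ t ∈ Finset.range m, 1/((t:ℝ)+1) ≤ ∑ t ∈ Finset.range J, 1/((t:ℝ)+1) := by
      apply Finset.sum_le_sum_of_subset_of_nonneg
      · exact Finset.range_subset_range.mpr hmJ
      · intro t _ _; exact hf t
    have h2 : (0:ℝ) ≤ ∑ t ∈ Finset.Ico J (J+m), 1/((t:ℝ)+1) :=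
      Finset.sum_nonneg fun t _ => hf t
    linarith
  · have hsp : ∑ t ∈ Finset.range m, 1/((t:ℝ)+1)
        = ∑ t ∈ Finset.range J, 1/((t:ℝ)+1) + ∑ t ∈ Finset.Ico J m, 1/((t:ℝ)+1) := by
      rw [Finset.range_eq_Ico, ← Finset.sum_Ico_consecutive _ (Nat.zero_le J) (le_of_lt hmJ),
        ← Finset.range_eq_Ico]
    have h3 : ∑ t ∈ Finset.Ico J m, 1/((t:ℝ)+1) ≤ ∑ t ∈ Finset.Ico J (J+m), 1/((t:ℝ)+1) := by
      apply Finset.sum_le_sum_of_subset_of_nonneg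
      · apply Finset.Ico_subset_Ico le_rfl; omega
      · intro t _ _; exact hf t
    linarith

lemma col_bound (J : ℕ) (hJ : 0 < J) (s : Finset ℕ) (hs : ∀ k ∈ s, J < k) :
    ∑ k ∈ s, 1/(((k:ℝ)-(J:ℝ))*(k:ℝ)) ≤ Hsum J / (J:ℝ) := by
  have hJR : (0:ℝ) < (J:ℝ) := by exact_mod_cast hJ
  set N := Finset.sup s id with hN
  have hsub : s ⊆ Finset.Icc (J+1) N := by
    intro k hk
    rw [Finset.mem_Icc]
    exact ⟨hs k hk, Finset.le_sup (f := id) hk⟩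
  have h1 : ∑ k ∈ s, 1/(((k:ℝ)-(J:ℝ))*(k:ℝ))
      ≤ ∑ k ∈ Finset.Icc (J+1) N, 1/(((k:ℝ)-(J:ℝ))*(k:ℝ)) := by
    apply Finset.sum_le_sum_of_subset_of_nonneg hsub
    intro k hk _
    rw [Finset.mem_Icc] at hk
    have : (J:ℝ)+1 ≤ (k:ℝ) := by exact_mod_cast hk.1
    have h0 : (0:ℝ) < ((k:ℝ)-(J:ℝ)) := by linarith
    have h0' : (0:ℝ) < (k:ℝ) := by linarith
    positivity
  have h2 : ∑ k ∈ Finset.Icc (J+1) N, 1/(((k:ℝ)-(J:ℝ))*(k:ℝ))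
      = (1/(J:ℝ)) * ∑ k ∈ Finset.Icc (J+1) N, (1/((k:ℝ)-(J:ℝ)) - 1/(k:ℝ)) := by
    rw [Finset.mul_sum]
    apply Finset.sum_congr rfl
    intro k hk
    rw [Finset.mem_Icc] at hk
    have hkR : (J:ℝ)+1 ≤ (k:ℝ) := by exact_mod_cast hk.1
    have h0 : ((k:ℝ)-(J:ℝ)) ≠ 0 := ne_of_gt (by linarith)
    have h0' : (k:ℝ) ≠ 0 := ne_of_gt (by linarith)
    field_simp
    ring
  have h3 : ∑ k ∈ Finset.Icc (J+1) N, (1/((k:ℝ)-(J:ℝ)) - 1/(k:ℝ)) ≤ Hsum J := by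
    have hIco : Finset.Icc (J+1) N = Finset.Ico (J+1) (N+1) := rfl
    rw [hIco, Finset.sum_Ico_eq_sum_range]
    have := col_key J (N+1-(J+1))
    refine le_trans (le_of_eq ?_) this
    apply Finset.sum_congr rfl
    intro t _
    push_cast
    ring_nf
  calc ∑ k ∈ s, 1/(((k:ℝ)-(J:ℝ))*(k:ℝ)) ≤ _ := h1
    _ = _ := h2
    _ ≤ (1/(J:ℝ)) * Hsum J := by
        apply mul_le_mul_of_nonneg_left h3
        positivity
    _ = Hsum J / (J:ℝ) := by ring

lemma log98_lb : (1/9:ℝ) ≤ Real.log (9/8) := by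
  have h := Real.log_le_sub_one_of_pos (show (0:ℝ) < 8/9 by norm_num)
  have hinv : Real.log ((8:ℝ)/9) = - Real.log (9/8) := by
    rw [show (8:ℝ)/9 = ((9:ℝ)/8)⁻¹ by norm_num, Real.log_inv]
  rw [hinv] at h
  linarith

lemma log3_lb : (1.095:ℝ) ≤ Real.log 3 := by
  have h9 : Real.log 9 = 2 * Real.log 3 := by
    rw [show (9:ℝ) = 3^2 by norm_num, Real.log_pow]; push_cast; ring
  have h8 : Real.log 8 = 3 * Real.log 2 := by
    rw [show (8:ℝ) = 2^3 by norm_num, Real.log_pow]; push_cast; ring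
  have hm : Real.log 9 = Real.log 8 + Real.log (9/8) := by
    rw [← Real.log_mul (by norm_num) (by norm_num)]; norm_num
  have h2 := Real.log_two_gt_d9
  have h98 := log98_lb
  rw [h8] at hm
  rw [hm] at h9
  linarith

lemma log5_lb : (1.586:ℝ) ≤ Real.log 5 := by
  have h54 : (1/5:ℝ) ≤ Real.log (5/4) := by
    have h := Real.log_le_sub_one_of_pos (show (0:ℝ) < 4/5 by norm_num)
    have hinv : Real.log ((4:ℝ)/5) = - Real.log (5/4) := by
      rw [show (4:ℝ)/5 = ((5:ℝ)/4)⁻¹ by norm_num, Real.log_inv]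
    rw [hinv] at h
    linarith
  have h4 : Real.log 4 = 2 * Real.log 2 := by
    rw [show (4:ℝ) = 2^2 by norm_num, Real.log_pow]; push_cast; ring
  have hm : Real.log 5 = Real.log 4 + Real.log (5/4) := by
    rw [← Real.log_mul (by norm_num) (by norm_num)]; norm_num
  have h2 := Real.log_two_gt_d9
  linarith

lemma final_num (J : ℕ) (hJ3 : 3 ≤ J) :
    Hsum J * (Hsum (J+1) + 1) ≤ 4*(Real.log J)^2*(((J:ℝ)+1)/(J:ℝ)) := by
  have hH3 : Hsum 3 = 11/6 := by norm_num [Hsum, Finset.sum_range_succ]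
  have hH4 : Hsum 4 = 25/12 := by norm_num [Hsum, Finset.sum_range_succ]
  have hH5 : Hsum 5 = 137/60 := by norm_num [Hsum, Finset.sum_range_succ]
  have hJR : (3:ℝ) ≤ (J:ℝ) := by exact_mod_cast hJ3
  have hJpos : (0:ℝ) < (J:ℝ) := by linarith
  have hfrac : (1:ℝ) ≤ ((J:ℝ)+1)/(J:ℝ) := by
    rw [le_div_iff₀ hJpos]; linarith
  rcases Nat.lt_or_ge J 5 with h5 | h5
  · interval_cases J
    · -- J = 3
      rw [hH3, show (3:ℕ)+1 = 4 by rfl, hH4]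
      have hL := log3_lb
      have : ((3:ℕ):ℝ) = (3:ℝ) := by norm_num
      rw [this]
      nlinarith [Real.log_nonneg (show (1:ℝ) ≤ 3 by norm_num)]
    · -- J = 4
      rw [hH4, show (4:ℕ)+1 = 5 by rfl, hH5]
      have h4 : Real.log 4 = 2 * Real.log 2 := by
        rw [show (4:ℝ) = 2^2 by norm_num, Real.log_pow]; push_cast; ring
      have h2 := Real.log_two_gt_d9
      have : ((4:ℕ):ℝ) = (4:ℝ) := by norm_num
      rw [this, h4]
      nlinarith
  · -- J ≥ 5
    set L := Real.log (J:ℝ) with hL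
    have hJ5R : (5:ℝ) ≤ (J:ℝ) := by exact_mod_cast h5
    have hL5 : Real.log 5 ≤ L := Real.log_le_log (by norm_num) hJ5R
    have hLlb : (1.586:ℝ) ≤ L := le_trans log5_lb hL5
    have hHJ : Hsum J ≤ 1 + L := Hsum_le J
    have hHJ1 : Hsum (J+1) ≤ 1.2 + L := by
      have h1 := Hsum_le (J+1)
      have hstep : Real.log ((J:ℝ)+1) ≤ L + 1/(J:ℝ) := by
        have hm : Real.log ((J:ℝ)+1) = L + Real.log (((J:ℝ)+1)/(J:ℝ)) := by
          rw [hL, ← Real.log_mul (ne_of_gt hJpos) (by positivity)]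
          congr 1
          field_simp
        have hs := Real.log_le_sub_one_of_pos (show (0:ℝ) < ((J:ℝ)+1)/(J:ℝ) by positivity)
        have : ((J:ℝ)+1)/(J:ℝ) - 1 = 1/(J:ℝ) := by field_simp; ring
        rw [this] at hs
        linarith
      have hJcast : ((J+1:ℕ):ℝ) = (J:ℝ)+1 := by push_cast; ring
      rw [hJcast] at h1
      have : 1/(J:ℝ) ≤ 1/5 := by
        rw [div_le_div_iff₀ hJpos (by norm_num)]; linarith
      linarith
    have hHJ0 : 0 ≤ Hsum J := Hsum_nonneg J
    have hHJ10 : 0 ≤ Hsum (J+1) + 1 := by have := Hsum_nonneg (J+1); linarith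
    have hmain : Hsum J * (Hsum (J+1) + 1) ≤ (1+L) * (2.2+L) := by
      apply mul_le_mul hHJ (by linarith) hHJ10 (by linarith)
    have hsq : (1+L)*(2.2+L) ≤ 4*L^2 := by
      nlinarith [sq_nonneg (L - 1.586)]
    have hpos4 : (0:ℝ) ≤ 4*L^2 := by positivity
    calc Hsum J * (Hsum (J+1) + 1) ≤ 4*L^2 := le_trans hmain hsq
      _ = 4*L^2 * 1 := by ring
      _ ≤ 4*L^2*(((J:ℝ)+1)/(J:ℝ)) := by
          apply mul_le_mul_of_nonneg_left hfrac hpos4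


set_option maxHeartbeats 1000000

/-- Schur-test bound on the lower-left block `(Id − P_J) T P_J`: under the
decay hypothesis `|⟨g_j, f_k⟩| ≤ η/(k² − (j + μ/(j+1))²)` for `j ≤ J < k`,
one has `‖(Id − P_J) T P_J‖ ≤ 4η log(J)/J`. -/
theorem stmt10 {H : Type*} [NormedAddCommGroup H] [InnerProductSpace ℝ H] [CompleteSpace H]
    (f : HilbertBasis ℕ ℝ H) (g : ℕ → H) (T : H →L[ℝ] H)
    (hT : ∀ n, T (f n) = g n)
    (η μ : ℝ) (hη : 0 < η) (hμ : 0 < μ)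
    (J : ℕ) (hJ3 : 3 ≤ J) (hJμ : 2 * μ ≤ (J : ℝ))
    (hdecay : ∀ j k : ℕ, j ≤ J → J < k →
      |⟪g j, f k⟫_ℝ| ≤ η / ((k : ℝ) ^ 2 - ((j : ℝ) + μ / ((j : ℝ) + 1)) ^ 2))
    (P : H →L[ℝ] H)
    -- `P` is the orthogonal projection onto `span{f_0, …, f_J}`:
    (hP : ∀ u : H, P u = ∑ n ∈ Finset.range (J + 1), ⟪u, f n⟫_ℝ • f n) :
    ‖(ContinuousLinearMap.id ℝ H - P).comp (T.comp P)‖ ≤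
      4 * η * Real.log J / J := by
  classical
  have horth := f.orthonormal
  have hJpos : (0:ℝ) < (J:ℝ) := by exact_mod_cast (by omega : 0 < J)
  have hJ1pos : (0:ℝ) < (J:ℝ)+1 := by linarith
  have hlog0 : (0:ℝ) ≤ Real.log J :=
    Real.log_nonneg (by exact_mod_cast (by omega : 1 ≤ J))
  have hB0 : (0:ℝ) ≤ 4 * η * Real.log J / J :=
    div_nonneg (mul_nonneg (by linarith) hlog0) hJpos.le
  set R' : ℝ := 2*η*((Hsum (J+1) + 1)/((J:ℝ)+1)) with hR'
  set C' : ℝ := 2*η*(Hsum J/(J:ℝ)) with hC'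
  have hHJ0 : 0 ≤ Hsum J := Hsum_nonneg J
  have hHJ10 : 0 ≤ Hsum (J+1) := Hsum_nonneg (J+1)
  have hR'0 : 0 ≤ R' := by rw [hR']; positivity
  have hC'0 : 0 ≤ C' := by rw [hC']; positivity
  -- pointwise matrix bound
  have hak : ∀ j k : ℕ, j ≤ J → J < k →
      |⟪g j, f k⟫_ℝ| ≤ 2*η/(((k:ℝ)-(j:ℝ))*(k:ℝ)) := by
    intro j k hj hk
    obtain ⟨hD, hle⟩ := ptwise hμ hj hk hJμ
    have hjkR : (j:ℝ) < (k:ℝ) := by exact_mod_cast lt_of_le_of_lt hj hk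
    have hk0 : (0:ℝ) < (k:ℝ) := by
      have : (0:ℕ) < k := by omega
      exact_mod_cast this
    have h0 : (0:ℝ) < ((k:ℝ)-(j:ℝ))*(k:ℝ) := by nlinarith
    refine le_trans (hdecay j k hj hk) ?_
    rw [div_le_div_iff₀ hD h0]
    nlinarith [mul_le_mul_of_nonneg_left hle hη.le]
  apply ContinuousLinearMap.opNorm_le_bound _ hB0
  intro u
  set A : H →L[ℝ] H := (ContinuousLinearMap.id ℝ H - P).comp (T.comp P) with hA
  set c : ℕ → ℝ := fun j => ⟪u, f j⟫_ℝ with hc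
  have hPin : ∀ (w : H) (m : ℕ),
      ⟪P w, f m⟫_ℝ = if m ∈ Finset.range (J+1) then ⟪w, f m⟫_ℝ else 0 := by
    intro w m
    rw [hP w, sum_inner]
    have hterm : ∀ n ∈ Finset.range (J+1),
        ⟪(⟪w, f n⟫_ℝ) • f n, f m⟫_ℝ = if n = m then ⟪w, f m⟫_ℝ else 0 := by
      intro n _
      rw [real_inner_smul_left, orthonormal_iff_ite.mp horth n m]
      by_cases h : n = m
      · subst h; simp
      · simp [h]
    rw [Finset.sum_congr rfl hterm, Finset.sum_ite_eq' (Finset.range (J+1)) m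
      (fun _ => ⟪w, f m⟫_ℝ)]
  have hAu : ∀ m : ℕ, ⟪A u, f m⟫_ℝ = ⟪T (P u), f m⟫_ℝ - ⟪P (T (P u)), f m⟫_ℝ := by
    intro m
    rw [hA]
    simp only [ContinuousLinearMap.comp_apply, ContinuousLinearMap.sub_apply,
      ContinuousLinearMap.id_apply]
    rw [inner_sub_left]
  have hTPu : T (P u) = ∑ j ∈ Finset.range (J+1), c j • g j := by
    rw [hP u, map_sum]
    exact Finset.sum_congr rfl fun j _ => by rw [map_smul, hT]
  have hinTP : ∀ m : ℕ, ⟪T (P u), f m⟫_ℝ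
      = ∑ j ∈ Finset.range (J+1), c j * ⟪g j, f m⟫_ℝ := by
    intro m
    rw [hTPu, sum_inner]
    exact Finset.sum_congr rfl fun j _ => real_inner_smul_left _ _ _
  have hd0 : ∀ m : ℕ, ¬ J < m → ⟪A u, f m⟫_ℝ = 0 := by
    intro m hm
    rw [hAu, hPin, if_pos (by simp only [Finset.mem_range]; omega), sub_self]
  have hd1 : ∀ m : ℕ, J < m →
      ⟪A u, f m⟫_ℝ = ∑ j ∈ Finset.range (J+1), c j * ⟪g j, f m⟫_ℝ := by
    intro m hm
    rw [hAu, hPin, if_neg (by simp only [Finset.mem_range]; omega), sub_zero, hinTP]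
  -- Parseval
  have hfun : (fun m => (⟪A u, f m⟫_ℝ)^2)
      = (fun m => ⟪A u, f m⟫_ℝ * ⟪f m, A u⟫_ℝ) := by
    funext m
    rw [real_inner_comm (f m) (A u)]
    ring
  have hPar2 : HasSum (fun m => (⟪A u, f m⟫_ℝ)^2) (‖A u‖^2) := by
    rw [hfun, ← real_inner_self_eq_norm_sq]
    exact f.hasSum_inner_mul_inner _ _
  -- finite-set bound
  have hbound : ∀ s : Finset ℕ, ∑ m ∈ s, (⟪A u, f m⟫_ℝ)^2 ≤ R' * C' * ‖u‖^2 := by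
    intro s
    rw [← Finset.sum_filter_add_sum_filter_not s (fun m => J < m)]
    have hzero : ∑ m ∈ s.filter (fun m => ¬ J < m), (⟪A u, f m⟫_ℝ)^2 = 0 := by
      apply Finset.sum_eq_zero
      intro m hm
      rw [hd0 m (Finset.mem_filter.mp hm).2]
      norm_num
    rw [hzero, add_zero]
    set s' := s.filter (fun m => J < m) with hs'
    have hs'mem : ∀ k ∈ s', J < k := fun k hk => (Finset.mem_filter.mp hk).2
    -- Cauchy-Schwarz + row bound per k
    have hCS : ∀ k ∈ s', (⟪A u, f k⟫_ℝ)^2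
        ≤ R' * ∑ j ∈ Finset.range (J+1), |⟪g j, f k⟫_ℝ| * (c j)^2 := by
      intro k hk
      have hkJ : J < k := hs'mem k hk
      rw [hd1 k hkJ]
      have habs : (∑ j ∈ Finset.range (J+1), c j * ⟪g j, f k⟫_ℝ)^2
          ≤ (∑ j ∈ Finset.range (J+1), |c j * ⟪g j, f k⟫_ℝ|)^2 := by
        rw [← sq_abs (∑ j ∈ Finset.range (J+1), c j * ⟪g j, f k⟫_ℝ)]
        have := Finset.abs_sum_le_sum_abs (fun j => c j * ⟪g j, f k⟫_ℝ) (Finset.range (J+1))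
        exact pow_le_pow_left₀ (abs_nonneg _) this 2
      have hcs2 := Finset.sum_sq_le_sum_mul_sum_of_sq_eq_mul (Finset.range (J+1))
        (r := fun j => |c j * ⟪g j, f k⟫_ℝ|)
        (f := fun j => |⟪g j, f k⟫_ℝ|)
        (g := fun j => |⟪g j, f k⟫_ℝ| * (c j)^2)
        (fun j _ => abs_nonneg _)
        (fun j _ => mul_nonneg (abs_nonneg _) (sq_nonneg _))
        (fun j _ => by
          show |c j * ⟪g j, f k⟫_ℝ| ^ 2 = |⟪g j, f k⟫_ℝ| * (|⟪g j, f k⟫_ℝ| * (c j)^2)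
          rw [sq_abs,
            show |⟪g j, f k⟫_ℝ| * (|⟪g j, f k⟫_ℝ| * (c j)^2)
              = |⟪g j, f k⟫_ℝ|^2 * (c j)^2 from by ring, sq_abs]
          ring)
      have hrow : ∑ j ∈ Finset.range (J+1), |⟪g j, f k⟫_ℝ| ≤ R' := by
        have h1 : ∀ j ∈ Finset.range (J+1),
            |⟪g j, f k⟫_ℝ| ≤ 2*η/(((k:ℝ)-(j:ℝ))*(k:ℝ)) := by
          intro j hj
          exact hak j k (by simp only [Finset.mem_range] at hj; omega) hkJ
        calc ∑ j ∈ Finset.range (J+1), |⟪g j, f k⟫_ℝ|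
            ≤ ∑ j ∈ Finset.range (J+1), 2*η/(((k:ℝ)-(j:ℝ))*(k:ℝ)) :=
              Finset.sum_le_sum h1
          _ = 2*η * ∑ j ∈ Finset.range (J+1), 1/(((k:ℝ)-(j:ℝ))*(k:ℝ)) := by
              rw [Finset.mul_sum]
              exact Finset.sum_congr rfl fun j _ => by ring
          _ ≤ 2*η * ((Hsum (J+1)+1)/((J:ℝ)+1)) := by
              apply mul_le_mul_of_nonneg_left (row_bound J k hkJ) (by linarith)
          _ = R' := by rw [hR']
      have hsum2nn : 0 ≤ ∑ j ∈ Finset.range (J+1), |⟪g j, f k⟫_ℝ| * (c j)^2 :=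
        Finset.sum_nonneg fun j _ => mul_nonneg (abs_nonneg _) (sq_nonneg _)
      calc (∑ j ∈ Finset.range (J+1), c j * ⟪g j, f k⟫_ℝ)^2
          ≤ (∑ j ∈ Finset.range (J+1), |c j * ⟪g j, f k⟫_ℝ|)^2 := habs
        _ ≤ (∑ j ∈ Finset.range (J+1), |⟪g j, f k⟫_ℝ|)
            * ∑ j ∈ Finset.range (J+1), |⟪g j, f k⟫_ℝ| * (c j)^2 := hcs2
        _ ≤ R' * ∑ j ∈ Finset.range (J+1), |⟪g j, f k⟫_ℝ| * (c j)^2 :=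
            mul_le_mul_of_nonneg_right hrow hsum2nn
    -- sum over k, exchange, column bound
    have hcol : ∀ j ∈ Finset.range (J+1), ∑ k ∈ s', |⟪g j, f k⟫_ℝ| ≤ C' := by
      intro j hj
      have hjJ : j ≤ J := by simp only [Finset.mem_range] at hj; omega
      have h1 : ∀ k ∈ s', |⟪g j, f k⟫_ℝ| ≤ 2*η/(((k:ℝ)-(J:ℝ))*(k:ℝ)) := by
        intro k hk
        have hkJ : J < k := hs'mem k hk
        refine le_trans (hak j k hjJ hkJ) ?_
        have hkR : (J:ℝ)+1 ≤ (k:ℝ) := by exact_mod_cast hkJ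
        have hjR : (j:ℝ) ≤ (J:ℝ) := by exact_mod_cast hjJ
        have hk0 : (0:ℝ) < (k:ℝ) := by linarith
        have hd1 : (0:ℝ) < ((k:ℝ)-(J:ℝ))*(k:ℝ) := by nlinarith
        have hd2 : ((k:ℝ)-(J:ℝ))*(k:ℝ) ≤ ((k:ℝ)-(j:ℝ))*(k:ℝ) := by nlinarith
        exact div_le_div_of_nonneg_left (by linarith) hd1 hd2
      calc ∑ k ∈ s', |⟪g j, f k⟫_ℝ|
          ≤ ∑ k ∈ s', 2*η/(((k:ℝ)-(J:ℝ))*(k:ℝ)) := Finset.sum_le_sum h1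
        _ = 2*η * ∑ k ∈ s', 1/(((k:ℝ)-(J:ℝ))*(k:ℝ)) := by
            rw [Finset.mul_sum]
            exact Finset.sum_congr rfl fun k _ => by ring
        _ ≤ 2*η * (Hsum J/(J:ℝ)) := by
            apply mul_le_mul_of_nonneg_left
              (col_bound J (by omega) s' hs'mem) (by linarith)
        _ = C' := by rw [hC']
    have hbessel : ∑ j ∈ Finset.range (J+1), (c j)^2 ≤ ‖u‖^2 := by
      have hb := horth.sum_inner_products_le (s := Finset.range (J+1)) u
      refine le_trans (le_of_eq ?_) hb
      apply Finset.sum_congr rfl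
      intro j _
      rw [hc]
      rw [real_inner_comm, Real.norm_eq_abs, sq_abs]
    calc ∑ k ∈ s', (⟪A u, f k⟫_ℝ)^2
        ≤ ∑ k ∈ s', R' * ∑ j ∈ Finset.range (J+1), |⟪g j, f k⟫_ℝ| * (c j)^2 :=
          Finset.sum_le_sum hCS
      _ = R' * ∑ j ∈ Finset.range (J+1), (c j)^2 * ∑ k ∈ s', |⟪g j, f k⟫_ℝ| := by
          rw [← Finset.mul_sum, Finset.sum_comm]
          congr 1
          apply Finset.sum_congr rfl
          intro j _
          rw [Finset.mul_sum]
          exact Finset.sum_congr rfl fun k _ => by ring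
      _ ≤ R' * ∑ j ∈ Finset.range (J+1), (c j)^2 * C' := by
          apply mul_le_mul_of_nonneg_left _ hR'0
          apply Finset.sum_le_sum
          intro j hj
          exact mul_le_mul_of_nonneg_left (hcol j hj) (sq_nonneg _)
      _ = R' * C' * ∑ j ∈ Finset.range (J+1), (c j)^2 := by
          rw [← Finset.sum_mul]
          ring
      _ ≤ R' * C' * ‖u‖^2 :=
          mul_le_mul_of_nonneg_left hbessel (mul_nonneg hR'0 hC'0)
  have hkey : ‖A u‖^2 ≤ R' * C' * ‖u‖^2 := hasSum_le_of_sum_le hPar2 hbound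
  -- numeric comparison
  have hRC : R' * C' ≤ (4*η*Real.log J/(J:ℝ))^2 := by
    have hnum := final_num J hJ3
    have h2 : Hsum J * (Hsum (J+1)+1) * (J:ℝ) ≤ 4*(Real.log J)^2*((J:ℝ)+1) := by
      rw [← le_div_iff₀ hJpos]
      calc Hsum J * (Hsum (J+1)+1) ≤ 4*(Real.log J)^2*(((J:ℝ)+1)/(J:ℝ)) := hnum
        _ = 4*(Real.log J)^2*((J:ℝ)+1)/(J:ℝ) := by ring
    have e1 : R' * C' = 4*η^2 * (Hsum J * (Hsum (J+1)+1)) / ((J:ℝ)*((J:ℝ)+1)) := by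
      rw [hR', hC']
      field_simp
      ring
    have e2 : (4*η*Real.log J/(J:ℝ))^2 = 16*η^2*(Real.log J)^2/(J:ℝ)^2 := by
      field_simp
      ring
    rw [e1, e2, div_le_div_iff₀ (by positivity) (by positivity)]
    nlinarith [mul_le_mul_of_nonneg_left h2 (by positivity : (0:ℝ) ≤ 4*η^2*(J:ℝ))]
  have hfinal : ‖A u‖^2 ≤ ((4*η*Real.log J/(J:ℝ)) * ‖u‖)^2 := by
    calc ‖A u‖^2 ≤ R' * C' * ‖u‖^2 := hkey
      _ ≤ (4*η*Real.log J/(J:ℝ))^2 * ‖u‖^2 :=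
          mul_le_mul_of_nonneg_right hRC (sq_nonneg _)
      _ = ((4*η*Real.log J/(J:ℝ)) * ‖u‖)^2 := by ring
  have h1 : (0:ℝ) ≤ (4*η*Real.log J/(J:ℝ)) * ‖u‖ :=
    mul_nonneg hB0 (norm_nonneg _)
  have hsqrt := Real.sqrt_le_sqrt hfinal
  rw [Real.sqrt_sq (norm_nonneg _), Real.sqrt_sq h1] at hsqrt
  exact hsqrt
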